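/- arXiv:2605.25843 — 4 statements merged into one kernel-verified Lean document; each statement's English description precedes it below -/
import Mathlib

section
/- Let d be a positive integer, δ ∈ (0, 1), and let x = (x_1, …, x_d) be a random vector in ℝ^d whose d coordinates are independent Gaussian random variables with mean 0 and variance 1/d. Then the probability that the Euclidean norm of x lies in the open interval (1 − δ, 1 + δ) is at least 1 − 2·exp(−δ²·d/10). -/
open MeasureTheory ProbabilityTheory
open scoped NNReal

open Real
open scoped ENNReal

lemma gauss_withDensity (v : ℝ≥0) (hv : v ≠ 0) :
    gaussianReal 0 v
      = MeasureTheory.volume.withDensity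
          (fun x => ((gaussianPDFReal 0 v x).toNNReal : ℝ≥0∞)) := by
  rw [gaussianReal_of_var_ne_zero _ hv]; rfl

lemma gauss_key (v : ℝ≥0) (hv : v ≠ 0) (t : ℝ) (x : ℝ) :
    gaussianPDFReal 0 v x * Real.exp (t * x ^ 2)
      = (Real.sqrt (2 * π * v))⁻¹
          * Real.exp (-((1 - 2 * t * v) / (2 * v)) * x ^ 2) := by
  have hv' : 0 < (v : ℝ) := lt_of_le_of_ne v.coe_nonneg (by exact_mod_cast (Ne.symm hv))
  rw [gaussianPDFReal]
  rw [mul_assoc, ← Real.exp_add]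
  congr 1
  field_simp
  ring

lemma integral_exp_sq_gauss (v : ℝ≥0) (hv : v ≠ 0) (t : ℝ) (ht : 2 * t * v < 1) :
    ∫ x, Real.exp (t * x ^ 2) ∂(gaussianReal 0 v)
      = Real.sqrt (1 - 2 * t * (v : ℝ))⁻¹ := by
  have hv' : 0 < (v : ℝ) := lt_of_le_of_ne v.coe_nonneg (by exact_mod_cast (Ne.symm hv))
  set b : ℝ := (1 - 2 * t * v) / (2 * v) with hb
  have hb0 : 0 < b := by
    apply div_pos (by linarith) (by linarith)
  rw [gauss_withDensity v hv,
    integral_withDensity_eq_integral_smul ((measurable_gaussianPDFReal 0 v).real_toNNReal) _]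
  have : ∀ x : ℝ, (gaussianPDFReal 0 v x).toNNReal • Real.exp (t * x ^ 2)
      = (Real.sqrt (2 * π * v))⁻¹ * Real.exp (-b * x ^ 2) := by
    intro x
    rw [NNReal.smul_def, smul_eq_mul, Real.coe_toNNReal _ (gaussianPDFReal_nonneg 0 v x)]
    exact gauss_key v hv t x
  simp only [this]
  rw [integral_const_mul, integral_gaussian]
  rw [← Real.sqrt_inv, ← Real.sqrt_mul (by positivity)]
  congr 1
  rw [hb]
  have hπ : (0:ℝ) < π := pi_pos
  have hne : (1:ℝ) - 2 * t * v ≠ 0 := by linarith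
  rw [div_div_eq_mul_div, div_eq_mul_inv, ← mul_assoc]
  rw [show ((2:ℝ)*π*v)⁻¹ * (π * (2*v)) = 1 by field_simp]
  rw [one_mul]

lemma integrable_exp_sq_gauss (v : ℝ≥0) (hv : v ≠ 0) (t : ℝ) (ht : 2 * t * v < 1) :
    Integrable (fun x => Real.exp (t * x ^ 2)) (gaussianReal 0 v) := by
  have hv' : 0 < (v : ℝ) := lt_of_le_of_ne v.coe_nonneg (by exact_mod_cast (Ne.symm hv))
  have hb0 : 0 < (1 - 2 * t * v) / (2 * v) := div_pos (by linarith) (by linarith)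
  rw [gauss_withDensity v hv,
    integrable_withDensity_iff_integrable_smul ((measurable_gaussianPDFReal 0 v).real_toNNReal)]
  have : (fun x : ℝ => (gaussianPDFReal 0 v x).toNNReal • Real.exp (t * x ^ 2))
      = fun x => (Real.sqrt (2 * π * v))⁻¹
          * Real.exp (-((1 - 2 * t * v) / (2 * v)) * x ^ 2) := by
    funext x
    rw [NNReal.smul_def, smul_eq_mul, Real.coe_toNNReal _ (gaussianPDFReal_nonneg 0 v x)]
    exact gauss_key v hv t x
  rw [this]
  exact (integrable_exp_neg_mul_sq hb0).const_mul _

lemma exp_sum_sq_eq_prod (d : ℕ) (t : ℝ) (x : Fin d → ℝ) :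
    Real.exp (t * ∑ i, x i ^ 2) = ∏ i, Real.exp (t * x i ^ 2) := by
  rw [Finset.mul_sum, Real.exp_sum]

lemma integrable_exp_sum_sq (d : ℕ) (v : ℝ≥0) (hv : v ≠ 0) (t : ℝ) (ht : 2 * t * v < 1) :
    Integrable (fun x : Fin d → ℝ => Real.exp (t * ∑ i, x i ^ 2))
      (Measure.pi fun _ => gaussianReal 0 v) := by
  letI : MeasureSpace ℝ := ⟨gaussianReal 0 v⟩
  haveI : SigmaFinite (volume : Measure ℝ) := by
    show SigmaFinite (gaussianReal 0 v); infer_instance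
  have : (Measure.pi fun _ : Fin d => gaussianReal 0 v) = (volume : Measure (Fin d → ℝ)) := rfl
  rw [this]
  simp only [exp_sum_sq_eq_prod]
  exact Integrable.fintype_prod (f := fun _ x => Real.exp (t * x ^ 2))
    (fun i => integrable_exp_sq_gauss v hv t ht)

lemma mgf_sum_sq (d : ℕ) (v : ℝ≥0) (hv : v ≠ 0) (t : ℝ) (ht : 2 * t * v < 1) :
    mgf (fun x : Fin d → ℝ => ∑ i, x i ^ 2) (Measure.pi fun _ => gaussianReal 0 v) t
      = (Real.sqrt (1 - 2 * t * (v : ℝ))⁻¹) ^ d := by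
  letI : MeasureSpace ℝ := ⟨gaussianReal 0 v⟩
  haveI : SigmaFinite (volume : Measure ℝ) := by
    show SigmaFinite (gaussianReal 0 v); infer_instance
  have hμ : (Measure.pi fun _ : Fin d => gaussianReal 0 v) = (volume : Measure (Fin d → ℝ)) := rfl
  rw [mgf, hμ]
  simp only [exp_sum_sq_eq_prod]
  rw [MeasureTheory.integral_fintype_prod_volume_eq_pow (ι := Fin d) (fun x => Real.exp (t * x ^ 2))]
  rw [show ∫ x, Real.exp (t * x ^ 2) = ∫ x, Real.exp (t * x ^ 2) ∂(gaussianReal 0 v) from rfl,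
    integral_exp_sq_gauss v hv t ht]
  simp

lemma factor_upper (δ : ℝ) (h0 : 0 < δ) (h1 : δ < 1) :
    Real.exp (-(δ / 8 * (1 + δ) ^ 2)) * Real.sqrt (1 - δ / 4)⁻¹
      ≤ Real.exp (-(δ ^ 2 / 10)) := by
  have hz : Real.sqrt (1 - δ / 4)⁻¹ ≤ Real.exp (δ / 8 * (1 + δ) ^ 2 - δ ^ 2 / 10) := by
    set z : ℝ := δ / 8 * (1 + δ) ^ 2 - δ ^ 2 / 10 with hzdef
    have h2z : 1 + 2 * z ≤ Real.exp (2 * z) := by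
      have := Real.add_one_le_exp (2 * z); linarith
    have hpos : (0:ℝ) < 1 - δ / 4 := by linarith
    have key : (1 - δ / 4)⁻¹ ≤ Real.exp (2 * z) := by
      rw [inv_le_iff_one_le_mul₀ hpos]
      calc (1:ℝ) ≤ (1 + 2 * z) * (1 - δ / 4) := by rw [hzdef]; nlinarith [sq_nonneg δ, sq_nonneg (δ*δ)]
        _ ≤ Real.exp (2 * z) * (1 - δ / 4) := by
            exact mul_le_mul_of_nonneg_right h2z hpos.le
      
    calc Real.sqrt (1 - δ / 4)⁻¹ ≤ Real.sqrt (Real.exp (2 * z)) := Real.sqrt_le_sqrt key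
      _ = Real.exp z := by
          rw [show (2:ℝ) * z = z + z by ring, Real.exp_add, Real.sqrt_mul_self (Real.exp_nonneg z)]
  calc Real.exp (-(δ / 8 * (1 + δ) ^ 2)) * Real.sqrt (1 - δ / 4)⁻¹
      ≤ Real.exp (-(δ / 8 * (1 + δ) ^ 2)) * Real.exp (δ / 8 * (1 + δ) ^ 2 - δ ^ 2 / 10) :=
        mul_le_mul_of_nonneg_left hz (Real.exp_nonneg _)
    _ = Real.exp (-(δ ^ 2 / 10)) := by rw [← Real.exp_add]; congr 1; ring

lemma factor_lower (δ : ℝ) (h0 : 0 < δ) (h1 : δ < 1) :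
    Real.exp (δ / 4 * (1 - δ) ^ 2) * Real.sqrt (1 + δ / 2)⁻¹
      ≤ Real.exp (-(δ ^ 2 / 10)) := by
  have hz : Real.sqrt (1 + δ / 2)⁻¹ ≤ Real.exp (-(δ / 4 * (1 - δ) ^ 2) - δ ^ 2 / 10) := by
    set z : ℝ := -(δ / 4 * (1 - δ) ^ 2) - δ ^ 2 / 10 with hzdef
    have hpos : (0:ℝ) < 1 + δ / 2 := by linarith
    have hxlt : δ / 2 * (1 - δ) ^ 2 + δ ^ 2 / 5 < 1 := by nlinarith [sq_nonneg δ, sq_nonneg (1-δ)]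
    have hexpneg : Real.exp (-(2 * z)) ≤ 1 + δ / 2 := by
      have hb : (0:ℝ) < 1 - (δ / 2 * (1 - δ) ^ 2 + δ ^ 2 / 5) := by linarith
      have h2 : 1 - (δ / 2 * (1 - δ) ^ 2 + δ ^ 2 / 5) ≤ Real.exp (-(δ / 2 * (1 - δ) ^ 2 + δ ^ 2 / 5)) := by
        have := Real.add_one_le_exp (-(δ / 2 * (1 - δ) ^ 2 + δ ^ 2 / 5)); linarith
      have h3 : Real.exp (δ / 2 * (1 - δ) ^ 2 + δ ^ 2 / 5)
          ≤ (1 - (δ / 2 * (1 - δ) ^ 2 + δ ^ 2 / 5))⁻¹ := by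
        rw [le_inv_comm₀ (Real.exp_pos _) hb, ← Real.exp_neg]
        exact h2
      have h4 : (1 - (δ / 2 * (1 - δ) ^ 2 + δ ^ 2 / 5))⁻¹ ≤ 1 + δ / 2 := by
        rw [inv_le_iff_one_le_mul₀ hb]
        nlinarith [sq_nonneg δ, sq_nonneg (1-δ), sq_nonneg (δ*(1-δ))]
      calc Real.exp (-(2 * z)) = Real.exp (δ / 2 * (1 - δ) ^ 2 + δ ^ 2 / 5) := by
            congr 1; rw [hzdef]; ring
        _ ≤ _ := h3.trans h4
    have key : (1 + δ / 2)⁻¹ ≤ Real.exp (2 * z) := by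
      rw [inv_le_iff_one_le_mul₀ hpos]
      calc (1:ℝ) = Real.exp (2*z) * Real.exp (-(2*z)) := by rw [← Real.exp_add]; simp
        _ ≤ Real.exp (2 * z) * (1 + δ / 2) :=
            mul_le_mul_of_nonneg_left hexpneg (Real.exp_nonneg _)
      
    calc Real.sqrt (1 + δ / 2)⁻¹ ≤ Real.sqrt (Real.exp (2 * z)) := Real.sqrt_le_sqrt key
      _ = Real.exp z := by
          rw [show (2:ℝ) * z = z + z by ring, Real.exp_add, Real.sqrt_mul_self (Real.exp_nonneg z)]
  calc Real.exp (δ / 4 * (1 - δ) ^ 2) * Real.sqrt (1 + δ / 2)⁻¹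
      ≤ Real.exp (δ / 4 * (1 - δ) ^ 2) * Real.exp (-(δ / 4 * (1 - δ) ^ 2) - δ ^ 2 / 10) :=
        mul_le_mul_of_nonneg_left hz (Real.exp_nonneg _)
    _ = Real.exp (-(δ ^ 2 / 10)) := by rw [← Real.exp_add]; congr 1; ring

lemma tail_upper (d : ℕ) (hd : 0 < d) (δ : ℝ) (h0 : 0 < δ) (h1 : δ < 1) :
    ((Measure.pi fun _ : Fin d => gaussianReal 0 ((d : ℝ≥0))⁻¹)
        {x : Fin d → ℝ | (1 + δ) ^ 2 ≤ ∑ i, x i ^ 2}).toReal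
      ≤ Real.exp (-(δ ^ 2 * d / 10)) := by
  set v : ℝ≥0 := ((d : ℝ≥0))⁻¹ with hvdef
  have hd0 : (d : ℝ) ≠ 0 := Nat.cast_ne_zero.mpr hd.ne'
  have hv : v ≠ 0 := by
    simp [hvdef, Nat.cast_ne_zero, hd.ne']
  have hvr : (v : ℝ) = (d : ℝ)⁻¹ := by
    rw [hvdef]; push_cast; rfl
  set t : ℝ := (d : ℝ) * (δ / 8) with htdef
  have ht0 : 0 ≤ t := by positivity
  have h2tv : 2 * t * (v : ℝ) = δ / 4 := by
    rw [htdef, hvr]; field_simp; ring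
  have ht : 2 * t * (v : ℝ) < 1 := by rw [h2tv]; linarith
  have hint := integrable_exp_sum_sq d v hv t ht
  refine (measure_ge_le_exp_mul_mgf (X := fun x : Fin d → ℝ => ∑ i, x i ^ 2)
    ((1 + δ) ^ 2) ht0 hint).trans ?_
  rw [mgf_sum_sq d v hv t ht, h2tv]
  have e1 : Real.exp (-t * (1 + δ) ^ 2) = Real.exp (-(δ / 8 * (1 + δ) ^ 2)) ^ d := by
    rw [← Real.exp_nat_mul]; congr 1; rw [htdef]; ring
  have e2 : Real.exp (-(δ ^ 2 * d / 10)) = Real.exp (-(δ ^ 2 / 10)) ^ d := by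
    rw [← Real.exp_nat_mul]; congr 1; ring
  rw [e1, e2, ← mul_pow]
  exact pow_le_pow_left₀ (by positivity) (factor_upper δ h0 h1) d

lemma tail_lower (d : ℕ) (hd : 0 < d) (δ : ℝ) (h0 : 0 < δ) (h1 : δ < 1) :
    ((Measure.pi fun _ : Fin d => gaussianReal 0 ((d : ℝ≥0))⁻¹)
        {x : Fin d → ℝ | ∑ i, x i ^ 2 ≤ (1 - δ) ^ 2}).toReal
      ≤ Real.exp (-(δ ^ 2 * d / 10)) := by
  set v : ℝ≥0 := ((d : ℝ≥0))⁻¹ with hvdef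
  have hd0 : (d : ℝ) ≠ 0 := Nat.cast_ne_zero.mpr hd.ne'
  have hv : v ≠ 0 := by
    simp [hvdef, Nat.cast_ne_zero, hd.ne']
  have hvr : (v : ℝ) = (d : ℝ)⁻¹ := by
    rw [hvdef]; push_cast; rfl
  set t : ℝ := -((d : ℝ) * (δ / 4)) with htdef
  have ht0 : t ≤ 0 := by
    rw [htdef]; simp; positivity
  have h2tv : 2 * t * (v : ℝ) = -(δ / 2) := by
    rw [htdef, hvr]; field_simp; ring
  have ht : 2 * t * (v : ℝ) < 1 := by rw [h2tv]; linarith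
  have hint := integrable_exp_sum_sq d v hv t ht
  refine (measure_le_le_exp_mul_mgf (X := fun x : Fin d → ℝ => ∑ i, x i ^ 2)
    ((1 - δ) ^ 2) ht0 hint).trans ?_
  rw [mgf_sum_sq d v hv t ht, h2tv]
  have e1 : Real.exp (-t * (1 - δ) ^ 2) = Real.exp (δ / 4 * (1 - δ) ^ 2) ^ d := by
    rw [← Real.exp_nat_mul]; congr 1; rw [htdef]; ring
  have e2 : Real.exp (-(δ ^ 2 * d / 10)) = Real.exp (-(δ ^ 2 / 10)) ^ d := by
    rw [← Real.exp_nat_mul]; congr 1; ring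
  have e3 : (1 : ℝ) - -(δ / 2) = 1 + δ / 2 := by ring
  rw [e1, e2, e3, ← mul_pow]
  exact pow_le_pow_left₀ (by positivity) (factor_lower δ h0 h1) d

/-- **Norm concentration.** If `x ∼ N(0, (1/d) I_d)` (i.e. the `d` coordinates of `x` are
independent Gaussians of mean `0` and variance `1/d`) and `δ ∈ (0,1)`, then
`P[‖x‖₂ ∈ (1-δ, 1+δ)] ≥ 1 - 2 exp(-δ² d / 10)`. -/
theorem stmt2 (d : ℕ) (hd : 0 < d) (δ : ℝ) (hδ : δ ∈ Set.Ioo (0 : ℝ) 1) :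
    1 - 2 * Real.exp (-(δ ^ 2 * d / 10)) ≤
      ((Measure.pi fun _ : Fin d => gaussianReal 0 ((d : ℝ≥0))⁻¹)
        {x : Fin d → ℝ | Real.sqrt (∑ i, (x i) ^ 2) ∈ Set.Ioo (1 - δ) (1 + δ)}).toReal := by
  obtain ⟨h0, h1⟩ := hδ
  set μd := Measure.pi fun _ : Fin d => gaussianReal 0 ((d : ℝ≥0))⁻¹ with hμdef
  haveI : IsProbabilityMeasure μd := by
    rw [hμdef]; infer_instance
  set E := {x : Fin d → ℝ | Real.sqrt (∑ i, (x i) ^ 2) ∈ Set.Ioo (1 - δ) (1 + δ)} with hEdef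
  set A := {x : Fin d → ℝ | ∑ i, x i ^ 2 ≤ (1 - δ) ^ 2} with hAdef
  set B := {x : Fin d → ℝ | (1 + δ) ^ 2 ≤ ∑ i, x i ^ 2} with hBdef
  have hmeasf : Measurable fun x : Fin d → ℝ => Real.sqrt (∑ i, x i ^ 2) := by
    apply Real.continuous_sqrt.measurable.comp
    exact Finset.measurable_sum _ fun i _ => (measurable_pi_apply i).pow_const 2
  have hE : MeasurableSet E := hmeasf measurableSet_Ioo
  have hsub : Eᶜ ⊆ A ∪ B := by
    intro x hx
    have hS : 0 ≤ ∑ i, x i ^ 2 := Finset.sum_nonneg fun i _ => sq_nonneg _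
    simp only [hEdef, Set.mem_compl_iff, Set.mem_setOf_eq, Set.mem_Ioo, not_and_or, not_lt] at hx
    rcases hx with hx | hx
    · left
      rw [hAdef]
      simp only [Set.mem_setOf_eq]
      calc ∑ i, x i ^ 2 = Real.sqrt (∑ i, x i ^ 2) ^ 2 := (Real.sq_sqrt hS).symm
        _ ≤ (1 - δ) ^ 2 := by
            apply pow_le_pow_left₀ (Real.sqrt_nonneg _) hx
    · right
      rw [hBdef]
      simp only [Set.mem_setOf_eq]
      calc (1 + δ) ^ 2 ≤ Real.sqrt (∑ i, x i ^ 2) ^ 2 := by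
            apply pow_le_pow_left₀ (by linarith) hx
        _ = ∑ i, x i ^ 2 := Real.sq_sqrt hS
  have hcompl : (μd E).toReal = 1 - (μd Eᶜ).toReal := by
    rw [measure_compl hE (measure_ne_top _ _), measure_univ,
      ENNReal.toReal_sub_of_le prob_le_one ENNReal.one_ne_top, ENNReal.toReal_one]
    ring
  have hAB : (μd Eᶜ).toReal ≤ (μd A).toReal + (μd B).toReal := by
    calc (μd Eᶜ).toReal ≤ (μd A + μd B).toReal := by
          apply ENNReal.toReal_mono
          · exact ENNReal.add_ne_top.mpr ⟨measure_ne_top _ _, measure_ne_top _ _⟩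
          · exact (measure_mono hsub).trans (measure_union_le A B)
      _ = (μd A).toReal + (μd B).toReal :=
          ENNReal.toReal_add (measure_ne_top _ _) (measure_ne_top _ _)
  have hA := tail_lower d hd δ h0 h1
  have hB := tail_upper d hd δ h0 h1
  rw [← hEdef] at *
  rw [hcompl]
  have : (μd Eᶜ).toReal ≤ 2 * Real.exp (-(δ ^ 2 * d / 10)) := by
    rw [← hμdef] at hA hB
    rw [← hAdef] at hA
    rw [← hBdef] at hB
    linarith
  linarith
end

section
/- Let C ≥ 1 be a real number, p ∈ (0, 1/2), ℓ and d positive integers, and let s be an integer with 1 ≤ s ≤ Cℓ. Let W be any s-dimensional linear subspace of ℝ^d, let π_W denote the orthogonal projection of ℝ^d onto W, and let x be a random vector in ℝ^d whose d coordinates are independent Gaussian random variables with mean 0 and variance 1/d. Set α = 100·C·log(10/p). Then P[‖π_W(x)‖₂ ≥ α√ℓ/√d] ≤ (p/10)^{10Cℓ}. -/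
open MeasureTheory ProbabilityTheory Real
open scoped NNReal ENNReal

namespace Stmt3Aux

/-- Fubini for lintegral of products over a finite product measure (non-dependent version). -/
theorem lintegral_pi_prod {β : Type*} [MeasurableSpace β] :
    ∀ {n : ℕ} (μ : Fin n → Measure β) [∀ i, SigmaFinite (μ i)]
      (f : Fin n → β → ℝ≥0∞), (∀ i, Measurable (f i)) →
      ∫⁻ y, ∏ i, f i (y i) ∂Measure.pi μ = ∏ i, ∫⁻ x, f i x ∂μ i := by
  intro n
  induction n with
  | zero =>
      intro μ _ f _
      simp [lintegral_const, Measure.pi_univ]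
  | succ n ih =>
      intro μ _ f hf
      rw [MeasurePreserving.lintegral_map_equiv _
        (MeasurableEquiv.piFinSuccAbove (fun _ : Fin (n+1) => β) 0).symm
        (MeasurePreserving.symm _ (measurePreserving_piFinSuccAbove μ 0))]
      have heq : ∀ z : β × (Fin n → β),
          (∏ i, f i (((MeasurableEquiv.piFinSuccAbove (fun _ : Fin (n+1) => β) 0).symm z) i))
            = f 0 z.1 * ∏ j : Fin n, f (Fin.succ j) (z.2 j) := by
        rintro ⟨a, x⟩
        simp only [MeasurableEquiv.piFinSuccAbove_symm_apply, Fin.insertNthEquiv,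
          Equiv.coe_fn_mk, Fin.insertNth_zero]
        rw [Fin.prod_univ_succ]
        simp [Fin.cons_zero, Fin.cons_succ]
      simp_rw [heq]
      rw [lintegral_prod_mul (f := f 0) (g := fun x : Fin n → β => ∏ j, f (Fin.succ j) (x j))
        (hf 0).aemeasurable
        (Measurable.aemeasurable (Finset.measurable_prod Finset.univ
          (fun j _ => (hf (Fin.succ j)).comp (measurable_pi_apply j))))]
      rw [ih (fun j => μ (Fin.succAbove 0 j)) (fun j => f (Fin.succ j))
        (fun j => hf _)]
      rw [Fin.prod_univ_succ]
      congr 1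

/-- The product of gaussians is a density against the product Lebesgue measure. -/
theorem pi_gaussian (n : ℕ) (v : ℝ≥0) (hv : v ≠ 0) :
    Measure.pi (fun _ : Fin n => gaussianReal 0 v) =
      (Measure.pi fun _ : Fin n => (volume : Measure ℝ)).withDensity
        (fun y => ∏ i, gaussianPDF 0 v (y i)) := by
  refine Measure.pi_eq fun s hs => ?_
  rw [withDensity_apply _ (MeasurableSet.univ_pi hs),
    ← lintegral_indicator (MeasurableSet.univ_pi hs) _]
  have hind : ∀ y : Fin n → ℝ,
      (Set.pi Set.univ s).indicator (fun y => ∏ i, gaussianPDF 0 v (y i)) y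
        = ∏ i, (s i).indicator (gaussianPDF 0 v) (y i) := by
    intro y
    by_cases hy : y ∈ Set.pi Set.univ s
    · rw [Set.indicator_of_mem hy]
      refine Finset.prod_congr rfl fun i _ => ?_
      rw [Set.indicator_of_mem (hy i (Set.mem_univ i))]
    · rw [Set.indicator_of_notMem hy]
      have hex : ∃ i, y i ∉ s i := by
        by_contra h
        push_neg at h
        exact hy fun i _ => h i
      obtain ⟨i, hi⟩ := hex
      exact (Finset.prod_eq_zero (Finset.mem_univ i)
        (by rw [Set.indicator_of_notMem hi])).symm
  simp_rw [hind]
  rw [lintegral_pi_prod _ _ (fun i => (measurable_gaussianPDF 0 v).indicator (hs i))]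
  refine Finset.prod_congr rfl fun i _ => ?_
  rw [lintegral_indicator (hs i), gaussianReal_apply 0 hv (s i)]

/-- Pushforward of a density measure under a measurable equivalence. -/
theorem map_withDensity {α β : Type*} [MeasurableSpace α] [MeasurableSpace β]
    (e : α ≃ᵐ β) (μ : Measure α) (f : α → ℝ≥0∞) (hf : Measurable f) :
    (μ.withDensity f).map e = (μ.map e).withDensity (fun y => f (e.symm y)) := by
  ext s hs
  rw [Measure.map_apply e.measurable hs, withDensity_apply _ (e.measurable hs),
    withDensity_apply _ hs,
    setLIntegral_map hs (show Measurable fun y => f (e.symm y) from hf.comp e.symm.measurable) e.measurable]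
  refine setLIntegral_congr_fun (e.measurable hs) (fun x _ => ?_)
  rw [e.symm_apply_apply]

/-- reindexing a sum over `Fin s` into a sum over `Fin d` with an `if`. -/
theorem sum_castLE {M : Type*} [AddCommMonoid M] {s d : ℕ} (h : s ≤ d) (g : Fin d → M) :
    ∑ j : Fin s, g (Fin.castLE h j) = ∑ i : Fin d, if (i : ℕ) < s then g i else 0 := by
  rw [Finset.sum_ite, Finset.sum_const_zero, add_zero]
  rw [show (Finset.univ.filter fun i : Fin d => (i : ℕ) < s)
      = Finset.univ.map (Fin.castLEEmb h) from ?_]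
  · rw [Finset.sum_map]
    rfl
  · ext i
    simp only [Finset.mem_filter, Finset.mem_univ, true_and, Finset.mem_map,
      Fin.castLEEmb, Function.Embedding.coeFn_mk]
    constructor
    · intro hi
      exact ⟨⟨i.1, hi⟩, by simp [Fin.castLE, Fin.ext_iff]⟩
    · rintro ⟨j, rfl⟩
      simpa using j.2

/-- MGF of the square of a gaussian with variance `1/d`, at `d/4`. -/
theorem mgf_sq (d : ℕ) (hd : 0 < d) :
    ∫⁻ x : ℝ, ENNReal.ofReal (Real.exp ((d / 4 : ℝ) * x ^ 2))
        ∂(gaussianReal 0 ((d : ℝ≥0))⁻¹) = ENNReal.ofReal (Real.sqrt 2) := by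
  have hd0 : (0 : ℝ) < d := by exact_mod_cast hd
  have hv : ((d : ℝ≥0))⁻¹ ≠ 0 :=
    inv_ne_zero (by exact_mod_cast hd.ne')
  have hvr : (((d : ℝ≥0))⁻¹ : ℝ) = (d : ℝ)⁻¹ := by
    push_cast
    ring
  rw [gaussianReal_of_var_ne_zero 0 hv,
    lintegral_withDensity_eq_lintegral_mul _ (measurable_gaussianPDF 0 _)
      (show Measurable fun x : ℝ => ENNReal.ofReal (Real.exp ((d / 4 : ℝ) * x ^ 2)) by
        fun_prop)]
  have hptw : ∀ x : ℝ,
      (gaussianPDF 0 ((d : ℝ≥0))⁻¹ * fun x => ENNReal.ofReal (Real.exp ((d / 4 : ℝ) * x ^ 2))) x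
        = ENNReal.ofReal ((Real.sqrt (2 * Real.pi * (d : ℝ)⁻¹))⁻¹
            * Real.exp (-(d / 4 : ℝ) * x ^ 2)) := by
    intro x
    simp only [Pi.mul_apply, gaussianPDF, gaussianPDFReal, sub_zero]
    rw [← ENNReal.ofReal_mul (by positivity)]
    congr 1
    rw [NNReal.coe_inv, NNReal.coe_natCast, mul_assoc, ← Real.exp_add]
    congr 1
    field_simp
    ring
  simp_rw [hptw]
  rw [← ofReal_integral_eq_lintegral_ofReal]
  · congr 1
    rw [integral_const_mul, integral_gaussian]
    have h1 : Real.pi / ((d : ℝ) / 4) = 2 * (2 * Real.pi * (d : ℝ)⁻¹) := by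
      field_simp
      ring
    rw [h1, Real.sqrt_mul (by norm_num : (0:ℝ) ≤ 2) (2 * Real.pi * (d : ℝ)⁻¹)]
    have h2 : Real.sqrt (2 * Real.pi * (d : ℝ)⁻¹) ≠ 0 := by
      have : (0 : ℝ) < 2 * Real.pi * (d : ℝ)⁻¹ := by positivity
      positivity
    field_simp
  · exact (integrable_exp_neg_mul_sq (by positivity : (0:ℝ) < (d : ℝ) / 4)).const_mul _
  · exact ae_of_all _ fun x => by positivity

end Stmt3Aux

open Stmt3Aux

set_option maxHeartbeats 1000000 in
/-- **Projection tail bound.** Let `1 ≤ s ≤ Cℓ` and let `W` be an `s`-dimensional subspace of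
`ℝ^d`. If `x ∼ N(0, (1/d) I_d)` and `α = 100 C log(10/p)`, then
`P[‖π_W(x)‖₂ ≥ α √ℓ / √d] ≤ (p/10)^{10 C ℓ}`. -/
theorem stmt3 (C : ℝ) (hC : 1 ≤ C) (p : ℝ) (hp : p ∈ Set.Ioo (0 : ℝ) (1 / 2))
    (ℓ d : ℕ) (hℓ : 0 < ℓ) (hd : 0 < d)
    (s : ℕ) (hs : 1 ≤ s) (hsC : (s : ℝ) ≤ C * ℓ)
    (W : Submodule ℝ (EuclideanSpace ℝ (Fin d))) (hW : Module.finrank ℝ W = s) :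
    (((Measure.pi fun _ : Fin d => gaussianReal 0 ((d : ℝ≥0))⁻¹).map
        (MeasurableEquiv.toLp 2 (Fin d → ℝ)))
      {x : EuclideanSpace ℝ (Fin d) |
        100 * C * Real.log (10 / p) * Real.sqrt ℓ / Real.sqrt d ≤
          ‖W.orthogonalProjectionOnto x‖}).toReal
      ≤ (p / 10) ^ (10 * C * (ℓ : ℝ)) := by
  obtain ⟨hp0, hp2⟩ := hp
  have hd0 : (0:ℝ) < d := by exact_mod_cast hd
  have hl0 : (0:ℝ) < ℓ := by exact_mod_cast hℓ
  set L : ℝ := Real.log (10 / p) with hLdef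
  have hL : 1 ≤ L := by
    rw [hLdef, Real.le_log_iff_exp_le (by positivity)]
    have h1 := Real.exp_one_lt_d9
    have h2 : (20:ℝ) ≤ 10 / p := by
      rw [le_div_iff₀ hp0]; nlinarith
    nlinarith
  set t : ℝ := 100 * C * L * Real.sqrt ℓ / Real.sqrt d with htdef
  have ht0 : 0 ≤ t := by
    have : (0:ℝ) ≤ 100 * C * L := by nlinarith
    positivity
  have hv : ((d : ℝ≥0))⁻¹ ≠ 0 := inv_ne_zero (by exact_mod_cast hd.ne')
  have hsd : s ≤ d := by
    have h1 := Submodule.finrank_le W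
    rwa [hW, finrank_euclideanSpace_fin] at h1
  -- adapted orthonormal basis
  let bW : OrthonormalBasis (Fin s) ℝ W := (stdOrthonormalBasis ℝ W).reindex (finCongr hW)
  let v : Fin d → EuclideanSpace ℝ (Fin d) :=
    fun i => if h : (i : ℕ) < s then (bW ⟨i, h⟩ : EuclideanSpace ℝ (Fin d)) else 0
  have hvon : Orthonormal ℝ (Set.restrict {i : Fin d | (i : ℕ) < s} v) := by
    constructor
    · rintro ⟨i, hi⟩
      have hi' : (i : ℕ) < s := hi
      simp only [Set.restrict, Set.domRestrict_apply, v, dif_pos hi']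
      exact (Submodule.coe_norm _).symm.trans (bW.orthonormal.1 _)
    · rintro ⟨i, hi⟩ ⟨j, hj⟩ hij
      have hi' : (i : ℕ) < s := hi
      have hj' : (j : ℕ) < s := hj
      simp only [Set.restrict, Set.domRestrict_apply, v, dif_pos hi', dif_pos hj']
      have hne : (⟨(i : ℕ), hi'⟩ : Fin s) ≠ ⟨(j : ℕ), hj'⟩ := by
        intro h
        apply hij
        apply Subtype.ext
        apply Fin.ext
        simpa [Fin.ext_iff] using h
      have h0 : (inner ℝ (bW ⟨(i : ℕ), hi'⟩) (bW ⟨(j : ℕ), hj'⟩) : ℝ) = 0 :=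
        bW.orthonormal.2 hne
      rwa [Submodule.coe_inner] at h0
  obtain ⟨b, hbv⟩ := hvon.exists_orthonormalBasis_extension_of_card_eq
    (by simp [finrank_euclideanSpace_fin])
  have hbW : ∀ j : Fin s, b (Fin.castLE hsd j) = (bW j : EuclideanSpace ℝ (Fin d)) := by
    intro j
    have hj : ((Fin.castLE hsd j : Fin d) : ℕ) < s := by simpa using j.2
    rw [hbv (Fin.castLE hsd j) hj]
    simp only [v, dif_pos hj]
    congr 1
  -- norm formula
  have hnorm : ∀ x : EuclideanSpace ℝ (Fin d),
      ‖W.orthogonalProjectionOnto x‖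
        = Real.sqrt (∑ j : Fin s, (b.repr x (Fin.castLE hsd j)) ^ 2) := by
    intro x
    rw [← bW.repr.norm_map (W.orthogonalProjectionOnto x), EuclideanSpace.norm_eq]
    congr 1
    refine Finset.sum_congr rfl fun j _ => ?_
    rw [Real.norm_eq_abs, sq_abs]
    congr 1
    rw [OrthonormalBasis.repr_apply_apply, OrthonormalBasis.repr_apply_apply, hbW j]
    exact Submodule.inner_orthogonalProjectionOnto_eq_of_mem_left (bW j) x
  -- density representation of the pushforward measure
  set G : EuclideanSpace ℝ (Fin d) → ℝ≥0∞ := fun x =>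
    ENNReal.ofReal ((Real.sqrt (2 * Real.pi * (d : ℝ)⁻¹))⁻¹ ^ d
      * Real.exp (-((d : ℝ)/2) * ‖x‖^2)) with hGdef
  have hGmeas : Measurable G := by
    apply Measurable.ennreal_ofReal
    fun_prop
  have hdens : ∀ x : EuclideanSpace ℝ (Fin d),
      (∏ i, gaussianPDF 0 ((d : ℝ≥0))⁻¹ (x i)) = G x := by
    intro x
    rw [hGdef]
    simp only [gaussianPDF, gaussianPDFReal, sub_zero, NNReal.coe_inv, NNReal.coe_natCast]
    rw [← ENNReal.ofReal_prod_of_nonneg (fun i _ => by positivity)]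
    congr 1
    rw [Finset.prod_mul_distrib, Finset.prod_const, Finset.card_univ, Fintype.card_fin,
      ← Real.exp_sum]
    congr 1
    have hx2 : ‖x‖^2 = ∑ i, (x i)^2 := by
      rw [EuclideanSpace.norm_eq, Real.sq_sqrt (by positivity)]
      exact Finset.sum_congr rfl fun i _ => by rw [Real.norm_eq_abs, sq_abs]
    rw [hx2, Finset.mul_sum]
    congr 1
    refine Finset.sum_congr rfl fun i _ => ?_
    have : (d:ℝ) ≠ 0 := hd0.ne'
    field_simp
  have hν : (Measure.pi fun _ : Fin d => gaussianReal 0 ((d : ℝ≥0))⁻¹).map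
      (MeasurableEquiv.toLp 2 (Fin d → ℝ))
      = (volume : Measure (EuclideanSpace ℝ (Fin d))).withDensity G := by
    rw [pi_gaussian d _ hv,
      map_withDensity (MeasurableEquiv.toLp 2 (Fin d → ℝ)) _
        (fun y => ∏ i, gaussianPDF 0 ((d : ℝ≥0))⁻¹ (y i))
        (show Measurable fun y : Fin d → ℝ => ∏ i, gaussianPDF 0 ((d : ℝ≥0))⁻¹ (y i) from
          Finset.measurable_prod Finset.univ fun i _ =>
            (measurable_gaussianPDF 0 _).comp (measurable_pi_apply i))]
    have hmapvol : (Measure.pi fun _ : Fin d => (volume : Measure ℝ)).map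
        (MeasurableEquiv.toLp 2 (Fin d → ℝ))
        = (volume : Measure (EuclideanSpace ℝ (Fin d))) := by
      rw [← MeasureTheory.volume_pi]
      exact (MeasurePreserving.symm _ (EuclideanSpace.volume_preserving_symm_measurableEquiv_toLp (Fin d))).map_eq
    rw [hmapvol]
    congr 1
    funext x
    rw [← hdens x]
    rfl
  -- the event in coordinates
  set S : Set (Fin d → ℝ) :=
    {y | t ≤ Real.sqrt (∑ j : Fin s, (y (Fin.castLE hsd j)) ^ 2)} with hSdef
  have hSmeas : MeasurableSet S := by
    refine measurableSet_le measurable_const ?_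
    apply Measurable.sqrt
    exact Finset.measurable_sum Finset.univ fun j _ => (measurable_pi_apply _).pow_const 2
  have hEV : {x : EuclideanSpace ℝ (Fin d) | t ≤ ‖W.orthogonalProjectionOnto x‖}
      = ⇑(b.measurableEquiv) ⁻¹'
        (⇑((MeasurableEquiv.toLp 2 (Fin d → ℝ)).symm) ⁻¹' S) := by
    ext x
    simp only [Set.mem_setOf_eq, Set.mem_preimage, hSdef]
    rw [hnorm x]
    rfl
  have hinv : ((volume : Measure (EuclideanSpace ℝ (Fin d))).withDensity G).map
      ⇑(b.measurableEquiv) = (volume : Measure (EuclideanSpace ℝ (Fin d))).withDensity G := by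
    rw [map_withDensity b.measurableEquiv _ _ hGmeas,
      b.measurePreserving_measurableEquiv.map_eq]
    congr 1
    funext y
    have hnorm' : ‖b.measurableEquiv.symm y‖ = ‖y‖ := by
      show ‖b.repr.toHomeomorph.toMeasurableEquiv.symm y‖ = ‖y‖
      simp only [Homeomorph.toMeasurableEquiv_symm_coe, LinearIsometryEquiv.coe_toHomeomorph]
      exact b.repr.symm.norm_map y
    rw [hGdef]
    simp only [hnorm']
  set μpi := Measure.pi fun _ : Fin d => gaussianReal 0 ((d : ℝ≥0))⁻¹ with hμpidef
  have key : (μpi.map (MeasurableEquiv.toLp 2 (Fin d → ℝ)))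
      {x : EuclideanSpace ℝ (Fin d) | t ≤ ‖W.orthogonalProjectionOnto x‖} = μpi S := by
    rw [hEV, ← Measure.map_apply b.measurableEquiv.measurable
      ((MeasurableEquiv.toLp 2 (Fin d → ℝ)).symm.measurable hSmeas)]
    rw [hν, hinv, ← hν]
    rw [Measure.map_apply (MeasurableEquiv.toLp 2 (Fin d → ℝ)).measurable
      ((MeasurableEquiv.toLp 2 (Fin d → ℝ)).symm.measurable hSmeas)]
    congr 1
  -- Chernoff bound
  set q : ℝ := (d : ℝ) / 4 with hqdef
  set f : Fin d → ℝ → ℝ≥0∞ := fun i x =>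
    ENNReal.ofReal (Real.exp (q * (if (i : ℕ) < s then x ^ 2 else 0))) with hfdef
  have hfmeas : ∀ i, Measurable (f i) := by
    intro i
    apply Measurable.ennreal_ofReal
    by_cases h : (i : ℕ) < s <;> simp only [h, if_true, if_false] <;> fun_prop
  have hprodf : ∀ y : Fin d → ℝ, (∏ i, f i (y i))
      = ENNReal.ofReal (Real.exp (q * ∑ j : Fin s, (y (Fin.castLE hsd j)) ^ 2)) := by
    intro y
    rw [hfdef]
    rw [← ENNReal.ofReal_prod_of_nonneg (fun i _ => (Real.exp_pos _).le), ← Real.exp_sum]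
    congr 2
    rw [← Finset.mul_sum]
    congr 1
    exact (sum_castLE hsd fun i => (y i) ^ 2).symm
  have hcard : (Finset.univ.filter fun i : Fin d => (i : ℕ) < s).card = s := by
    have h1 := sum_castLE (M := ℕ) hsd fun _ => 1
    rw [Finset.card_filter]
    simpa using h1.symm
  have chern : μpi S ≤ ENNReal.ofReal (Real.exp (-q * t ^ 2) * Real.sqrt 2 ^ s) := by
    have hstep1 : μpi S ≤ ENNReal.ofReal (Real.exp (-q * t ^ 2)) *
        ∫⁻ y, ∏ i, f i (y i) ∂μpi := by
      rw [← lintegral_indicator_one hSmeas, ← lintegral_const_mul (ENNReal.ofReal (Real.exp (-q * t ^ 2)))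
        (show Measurable fun y : Fin d → ℝ => ∏ i, f i (y i) from
          Finset.measurable_prod Finset.univ fun i _ =>
            (hfmeas i).comp (measurable_pi_apply i))]
      refine lintegral_mono fun y => ?_
      by_cases hy : y ∈ S
      · rw [Set.indicator_of_mem hy, hprodf y,
          ← ENNReal.ofReal_mul (Real.exp_pos _).le, ← Real.exp_add]
        refine ENNReal.one_le_ofReal.mpr (Real.one_le_exp ?_)
        have h1 : t ≤ Real.sqrt (∑ j : Fin s, (y (Fin.castLE hsd j)) ^ 2) := hy
        have h2 := Real.sq_sqrt (show (0:ℝ) ≤ ∑ j : Fin s, (y (Fin.castLE hsd j)) ^ 2 by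
          positivity)
        have h3 : t ^ 2 ≤ ∑ j : Fin s, (y (Fin.castLE hsd j)) ^ 2 := by
          nlinarith [pow_le_pow_left₀ ht0 h1 2]
        have hq0 : (0:ℝ) ≤ q := by rw [hqdef]; positivity
        nlinarith
      · rw [Set.indicator_of_notMem hy]
        exact zero_le
    have hstep2 : ∫⁻ y, ∏ i, f i (y i) ∂μpi
        = ∏ i : Fin d, ∫⁻ x, f i x ∂(gaussianReal 0 ((d : ℝ≥0))⁻¹) := by
      rw [hμpidef]
      exact lintegral_pi_prod _ f hfmeas
    have hstep3 : (∏ i : Fin d, ∫⁻ x, f i x ∂(gaussianReal 0 ((d : ℝ≥0))⁻¹))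
        = ENNReal.ofReal (Real.sqrt 2) ^ s := by
      have heach : ∀ i : Fin d, ∫⁻ x, f i x ∂(gaussianReal 0 ((d : ℝ≥0))⁻¹)
          = if (i : ℕ) < s then ENNReal.ofReal (Real.sqrt 2) else 1 := by
        intro i
        by_cases h : (i : ℕ) < s
        · rw [if_pos h]
          rw [show f i = fun x : ℝ => ENNReal.ofReal (Real.exp (((d:ℝ) / 4) * x ^ 2)) from
            funext fun x => by rw [hfdef]; simp [h, hqdef]]
          exact mgf_sq d hd
        · rw [if_neg h]
          rw [show f i = fun _ : ℝ => (1 : ℝ≥0∞) from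
            funext fun x => by rw [hfdef]; simp [h]]
          simp
      rw [Finset.prod_congr rfl fun i _ => heach i, Finset.prod_ite, Finset.prod_const,
        Finset.prod_const, one_pow, mul_one, hcard]
    rw [hstep2, hstep3] at hstep1
    refine le_trans hstep1 (le_of_eq ?_)
    rw [ENNReal.ofReal_mul (Real.exp_pos _).le, ENNReal.ofReal_pow (Real.sqrt_nonneg 2)]
  -- final numeric estimate
  have htsq : q * t ^ 2 = 2500 * C ^ 2 * L ^ 2 * (ℓ : ℝ) := by
    have h1 : t ^ 2 = (100 * C * L) ^ 2 * (ℓ : ℝ) / (d : ℝ) := by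
      rw [htdef, div_pow, mul_pow (100 * C * L), Real.sq_sqrt hl0.le, Real.sq_sqrt hd0.le]
    rw [h1, hqdef]
    field_simp
    ring
  have hfinal : Real.exp (-q * t ^ 2) * Real.sqrt 2 ^ s ≤ (p / 10) ^ (10 * C * (ℓ : ℝ)) := by
    have hlog2 : Real.log (Real.sqrt 2) ≤ 1 := by
      rw [Real.log_sqrt (by norm_num)]
      nlinarith [Real.log_two_lt_d9]
    have hsqrt2 : Real.sqrt 2 ^ s = Real.exp ((s : ℝ) * Real.log (Real.sqrt 2)) := by
      rw [Real.exp_nat_mul, Real.exp_log (by positivity)]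
    have hrpow : (p / 10 : ℝ) ^ (10 * C * (ℓ : ℝ)) = Real.exp ((10 * C * (ℓ : ℝ)) * (-L)) := by
      rw [Real.rpow_def_of_pos (by positivity)]
      congr 1
      have hlpd : Real.log (p / 10) = -L := by
        rw [hLdef, ← Real.log_inv]
        congr 1
        rw [inv_div]
      rw [hlpd]
      ring
    rw [hsqrt2, ← Real.exp_add, hrpow, Real.exp_le_exp, neg_mul, htsq]
    have hs1 : (s : ℝ) * Real.log (Real.sqrt 2) ≤ (s : ℝ) := by
      nlinarith [Nat.cast_nonneg (α := ℝ) s]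
    have hCL : 1 ≤ C * L := by nlinarith
    have e1 : C * ℓ ≤ C * L * ℓ := by nlinarith
    have e2 : C * L * ℓ ≤ C ^ 2 * L ^ 2 * ℓ := by nlinarith
    nlinarith
  refine ENNReal.toReal_le_of_le_ofReal (Real.rpow_nonneg (by positivity) _) ?_
  rw [key]
  exact le_trans chern (ENNReal.ofReal_le_ofReal hfinal)
end

section
/- Let W be a nonnegative real random variable with E[W²] < ∞ whose survival function satisfies P(W ≥ s)·P(W ≥ t) ≥ P(W ≥ s + t) for all s, t ≥ 0. Then E[W²] ≤ 2·(E[W])²; in particular Var(W) ≤ (E[W])². -/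
open MeasureTheory Set ENNReal

/-- **Variance bound from submultiplicative survival function.** Let `W ≥ 0` be a real random
variable with `E[W²] < ∞` whose survival function satisfies
`P(W ≥ s) P(W ≥ t) ≥ P(W ≥ s + t)` for all `s, t ≥ 0`. Then `E[W²] ≤ 2 (E[W])²`;
in particular `Var(W) ≤ (E[W])²`. -/
theorem stmt11 {Ω : Type*} [MeasurableSpace Ω] (μ : Measure Ω) [IsProbabilityMeasure μ]
    (W : Ω → ℝ) (hW : Measurable W) (hpos : ∀ ω, 0 ≤ W ω)
    (hint : Integrable (fun ω => (W ω) ^ 2) μ)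
    (hsurv : ∀ s t : ℝ, 0 ≤ s → 0 ≤ t →
      μ {ω | s + t ≤ W ω} ≤ μ {ω | s ≤ W ω} * μ {ω | t ≤ W ω}) :
    (∫ ω, (W ω) ^ 2 ∂μ) ≤ 2 * (∫ ω, W ω ∂μ) ^ 2 ∧
    (∫ ω, (W ω) ^ 2 ∂μ) - (∫ ω, W ω ∂μ) ^ 2 ≤ (∫ ω, W ω ∂μ) ^ 2 := by
  set F : ℝ → ℝ≥0∞ := fun t => μ {ω | t ≤ W ω} with hF
  have F_anti : Antitone F := by
    intro a b hab
    exact measure_mono (fun ω (h : b ≤ W ω) => hab.trans h)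
  have F_mble : Measurable F := F_anti.measurable
  set I : ℝ≥0∞ := ∫⁻ t in Ioi (0:ℝ), F t with hI
  -- integrability of W
  have hWint : Integrable W μ := by
    have h2 : MemLp W 2 μ := by
      rw [memLp_two_iff_integrable_sq hW.aestronglyMeasurable]
      simpa [sq] using hint
    exact (memLp_one_iff_integrable).mp (h2.mono_exponent (by norm_num))
  -- layer cake for W
  have hW_lc : ∫⁻ ω, ENNReal.ofReal (W ω) ∂μ = I :=
    lintegral_eq_lintegral_meas_le μ (Filter.Eventually.of_forall hpos) hW.aemeasurable
  -- layer cake for W^2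
  have hW2_lc : ∫⁻ ω, ENNReal.ofReal ((W ω) ^ 2) ∂μ
      = ∫⁻ t in Ioi (0:ℝ), F t * ENNReal.ofReal (2 * t) := by
    have g_int : ∀ t > (0:ℝ), IntervalIntegrable (fun s => 2 * s) volume 0 t := fun _ _ =>
      (intervalIntegral.intervalIntegrable_id).const_mul 2
    have key := lintegral_comp_eq_lintegral_meas_le_mul μ
      (f := W) (g := fun s => 2 * s) (Filter.Eventually.of_forall hpos) hW.aemeasurable g_int
      ((ae_restrict_iff' measurableSet_Ioi).mpr (Filter.Eventually.of_forall
        fun t ht => by have := mem_Ioi.mp ht; show (0:ℝ) ≤ 2 * t; linarith))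
    have : ∀ ω, (∫ s in (0:ℝ)..(W ω), 2 * s) = (W ω) ^ 2 := by
      intro ω
      rw [intervalIntegral.integral_const_mul, integral_id]
      ring
    simp_rw [this] at key
    exact key
  -- the key translation-invariance inequality
  have hshift : ∀ s : ℝ, 0 ≤ s → (∫⁻ t in Ioi s, F t) ≤ F s * I := by
    intro s hs
    have hmap : (∫⁻ t in Ioi s, F t) = ∫⁻ u in Ioi (0:ℝ), F (u + s) := by
      have h1 : Measure.map (· + s) volume = volume := map_add_right_eq_self volume s
      conv_lhs => rw [← h1]
      rw [setLIntegral_map measurableSet_Ioi F_mble (measurable_add_const s)]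
      congr 1
      ext u
      simp [lt_add_iff_pos_left]
    rw [hmap]
    calc (∫⁻ u in Ioi (0:ℝ), F (u + s))
        ≤ ∫⁻ u in Ioi (0:ℝ), F s * F u := by
          apply setLIntegral_mono (F_mble.const_mul _)
          intro u hu
          have := hsurv s u hs (le_of_lt hu)
          simpa [hF, add_comm] using this
      _ = F s * I := by rw [hI, ← lintegral_const_mul _ F_mble]
  -- Tonelli: ∫ t F(t) dt = ∫∫ ...
  have hfub : (∫⁻ t in Ioi (0:ℝ), F t * ENNReal.ofReal t) ≤ I * I := by
    have hmeas : Measurable fun p : ℝ × ℝ => ite (p.1 < p.2) (F p.2) 0 :=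
      Measurable.ite (measurableSet_lt measurable_fst measurable_snd)
        (F_mble.comp measurable_snd) measurable_const
    have step1 : (∫⁻ t in Ioi (0:ℝ), F t * ENNReal.ofReal t)
        = ∫⁻ t in Ioi (0:ℝ), ∫⁻ s in Ioi (0:ℝ), ite (s < t) (F t) 0 := by
      apply setLIntegral_congr_fun measurableSet_Ioi
      intro t ht
      beta_reduce
      have : (∫⁻ s in Ioi (0:ℝ), ite (s < t) (F t) 0)
          = ∫⁻ s in Ioi (0:ℝ), (Iio t).indicator (fun _ => F t) s :=
        lintegral_congr fun s => by simp [indicator_apply]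
      rw [this, lintegral_indicator measurableSet_Iio, Measure.restrict_restrict measurableSet_Iio]
      have : Iio t ∩ Ioi (0:ℝ) = Ioo 0 t := by ext x; simp [and_comm, Ioo]
      rw [this, setLIntegral_const, Real.volume_Ioo, sub_zero, mul_comm]
    have step2 : (∫⁻ t in Ioi (0:ℝ), ∫⁻ s in Ioi (0:ℝ), ite (s < t) (F t) 0)
        = ∫⁻ s in Ioi (0:ℝ), ∫⁻ t in Ioi (0:ℝ), ite (s < t) (F t) 0 := by
      rw [lintegral_lintegral_swap]
      exact (hmeas.comp measurable_swap).aemeasurable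
    have step3 : ∀ s : ℝ, 0 ≤ s →
        (∫⁻ t in Ioi (0:ℝ), ite (s < t) (F t) 0) = ∫⁻ t in Ioi s, F t := by
      intro s hs
      have : (∫⁻ t in Ioi (0:ℝ), ite (s < t) (F t) 0)
          = ∫⁻ t in Ioi (0:ℝ), (Ioi s).indicator F t :=
        lintegral_congr fun t => by simp [indicator_apply]
      rw [this, lintegral_indicator measurableSet_Ioi, Measure.restrict_restrict measurableSet_Ioi]
      congr 1
      rw [Ioi_inter_Ioi, max_eq_left hs]
    calc (∫⁻ t in Ioi (0:ℝ), F t * ENNReal.ofReal t)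
        = ∫⁻ s in Ioi (0:ℝ), ∫⁻ t in Ioi (0:ℝ), ite (s < t) (F t) 0 := by rw [step1, step2]
      _ = ∫⁻ s in Ioi (0:ℝ), ∫⁻ t in Ioi s, F t := by
          apply setLIntegral_congr_fun measurableSet_Ioi
          exact fun s hs => step3 s (le_of_lt hs)
      _ ≤ ∫⁻ s in Ioi (0:ℝ), F s * I := by
          apply setLIntegral_mono' measurableSet_Ioi
          intro s hs
          exact hshift s (le_of_lt hs)
      _ = I * I := by rw [hI, ← lintegral_mul_const _ F_mble]
  -- combine
  have hmain : ∫⁻ ω, ENNReal.ofReal ((W ω) ^ 2) ∂μ ≤ 2 * (I * I) := by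
    rw [hW2_lc]
    calc (∫⁻ t in Ioi (0:ℝ), F t * ENNReal.ofReal (2 * t))
        = ∫⁻ t in Ioi (0:ℝ), 2 * (F t * ENNReal.ofReal t) := by
          apply setLIntegral_congr_fun measurableSet_Ioi
          intro t ht
          beta_reduce
          rw [ENNReal.ofReal_mul (by norm_num)]
          ring_nf
          rw [ENNReal.ofReal_ofNat]
          ring
      _ = 2 * ∫⁻ t in Ioi (0:ℝ), F t * ENNReal.ofReal t :=
          lintegral_const_mul 2 (F_mble.mul measurable_ofReal)
      _ ≤ 2 * (I * I) := by gcongr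
  -- finiteness of I
  have hI_fin : I < ⊤ := by
    rw [← hW_lc]
    have := hWint.hasFiniteIntegral
    rwa [hasFiniteIntegral_iff_ofReal (Filter.Eventually.of_forall hpos)] at this
  -- convert to real integrals
  have hint1 : (∫ ω, W ω ∂μ) = I.toReal := by
    rw [← hW_lc, integral_eq_lintegral_of_nonneg_ae (Filter.Eventually.of_forall hpos)
      hW.aestronglyMeasurable]
  have hint2 : (∫ ω, (W ω) ^ 2 ∂μ) = (∫⁻ ω, ENNReal.ofReal ((W ω) ^ 2) ∂μ).toReal := by
    rw [integral_eq_lintegral_of_nonneg_ae (Filter.Eventually.of_forall fun ω => sq_nonneg _)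
      (hW.pow_const 2).aestronglyMeasurable]
  have hfin2 : (2 : ℝ≥0∞) * (I * I) ≠ ⊤ := by
    exact ENNReal.mul_ne_top (by norm_num) (ENNReal.mul_ne_top hI_fin.ne hI_fin.ne)
  have key : (∫ ω, (W ω) ^ 2 ∂μ) ≤ 2 * (∫ ω, W ω ∂μ) ^ 2 := by
    rw [hint1, hint2]
    have := ENNReal.toReal_mono hfin2 hmain
    rwa [ENNReal.toReal_mul, ENNReal.toReal_mul, ENNReal.toReal_ofNat, ← sq] at this
  exact ⟨key, by linarith⟩
end

section
/- Let Z be a standard normal random variable and b ∈ ℝ. Then Var(Z | Z ≤ b) ≤ (b + m(b))², where m(b) = φ(b)/Φ(b); equivalently, the variance of Z conditioned on {Z ≤ b} is at most the square of the conditional mean of b − Z. -/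
open Real MeasureTheory Set Filter Topology


/-- The standard normal density `φ(t) = exp(-t²/2)/√(2π)`. -/
noncomputable def stdPhi (t : ℝ) : ℝ := Real.exp (-t ^ 2 / 2) / Real.sqrt (2 * Real.pi)

/-- The standard normal CDF `Φ(t) = ∫_{-∞}^t φ(s) ds`. -/
noncomputable def stdCDF (t : ℝ) : ℝ := ∫ s in Set.Iic t, stdPhi s

/-- The inverse Mills ratio `m(b) = φ(b)/Φ(b)`. -/
noncomputable def millsM (b : ℝ) : ℝ := stdPhi b / stdCDF b

/-- The variance of a standard normal truncated from above at `b`: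
`V(b) = E[Z² | Z ≤ b] - (E[Z | Z ≤ b])²`, with
`E[f(Z) | Z ≤ b] = (1/Φ(b)) ∫_{-∞}^b f(z) φ(z) dz`. -/
noncomputable def truncVar (b : ℝ) : ℝ :=
  (stdCDF b)⁻¹ * (∫ z in Set.Iic b, z ^ 2 * stdPhi z)
    - ((stdCDF b)⁻¹ * (∫ z in Set.Iic b, z * stdPhi z)) ^ 2

open Real MeasureTheory Set Filter Topology


lemma sqrt2pi_pos : 0 < Real.sqrt (2 * Real.pi) := Real.sqrt_pos.2 (by positivity)

lemma stdPhi_pos (t : ℝ) : 0 < stdPhi t := div_pos (Real.exp_pos _) sqrt2pi_pos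

lemma continuous_stdPhi : Continuous stdPhi := by
  unfold stdPhi
  fun_prop

lemma hasDerivAt_stdPhi (t : ℝ) : HasDerivAt stdPhi (-t * stdPhi t) t := by
  have h1 : HasDerivAt (fun t : ℝ => -t ^ 2 / 2) (-t) t := by
    have := ((hasDerivAt_pow 2 t).neg.div_const 2)
    simpa using this.congr_deriv (by ring)
  have h2 := (h1.exp).div_const (Real.sqrt (2 * Real.pi))
  unfold stdPhi
  exact h2.congr_deriv (by ring)

lemma integrable_stdPhi : Integrable stdPhi := by
  have h : Integrable (fun x : ℝ => Real.exp (-(1/2 : ℝ) * x ^ 2)) :=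
    integrable_exp_neg_mul_sq (by norm_num)
  have := h.div_const (Real.sqrt (2 * Real.pi))
  refine this.congr (Eventually.of_forall fun x => ?_)
  unfold stdPhi
  ring_nf

lemma integrable_mul_stdPhi : Integrable (fun z : ℝ => z * stdPhi z) := by
  have h : Integrable (fun x : ℝ => x * Real.exp (-(1/2 : ℝ) * x ^ 2)) :=
    integrable_mul_exp_neg_mul_sq (by norm_num)
  refine (h.div_const (Real.sqrt (2 * Real.pi))).congr (Eventually.of_forall fun x => ?_)
  unfold stdPhi
  ring_nf

lemma sq_mul_exp_le (z : ℝ) : z ^ 2 * Real.exp (-z ^ 2 / 2) ≤ 4 * Real.exp (-(1/4 : ℝ) * z ^ 2) := by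
  have h1 : z ^ 2 / 4 ≤ Real.exp (z ^ 2 / 4) := by
    have := Real.add_one_le_exp (z ^ 2 / 4)
    linarith
  have h2 : z ^ 2 ≤ 4 * Real.exp (z ^ 2 / 4) := by linarith
  calc z ^ 2 * Real.exp (-z ^ 2 / 2) ≤ (4 * Real.exp (z ^ 2 / 4)) * Real.exp (-z ^ 2 / 2) :=
        mul_le_mul_of_nonneg_right h2 (Real.exp_pos _).le
    _ = 4 * Real.exp (-(1/4 : ℝ) * z ^ 2) := by
        rw [mul_assoc, ← Real.exp_add]; ring_nf

lemma integrable_sq_mul_stdPhi : Integrable (fun z : ℝ => z ^ 2 * stdPhi z) := by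
  have h : Integrable (fun x : ℝ => 4 / Real.sqrt (2 * Real.pi) * Real.exp (-(1/4 : ℝ) * x ^ 2)) :=
    (integrable_exp_neg_mul_sq (by norm_num)).const_mul _
  refine h.mono ((continuous_pow 2).mul continuous_stdPhi).aestronglyMeasurable
    (Eventually.of_forall fun z => ?_)
  have h0 := stdPhi_pos z
  rw [Real.norm_eq_abs, Real.norm_eq_abs, abs_of_nonneg (by positivity), abs_of_nonneg (by positivity)]
  unfold stdPhi
  rw [mul_div_assoc', div_mul_eq_mul_div, div_le_div_iff₀ sqrt2pi_pos sqrt2pi_pos]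
  have := sq_mul_exp_le z
  nlinarith [sqrt2pi_pos, Real.exp_pos (-(1/4:ℝ) * z ^ 2)]


lemma stdPhi_le_exp (z : ℝ) : stdPhi z ≤ Real.exp (1/2) / Real.sqrt (2*Real.pi) * Real.exp z := by
  unfold stdPhi
  rw [div_mul_eq_mul_div, ← Real.exp_add]
  gcongr
  nlinarith [sq_nonneg (z+1)]

lemma abs_mul_stdPhi_le (z : ℝ) :
    |z| * stdPhi z ≤ Real.exp 2 / Real.sqrt (2*Real.pi) * Real.exp z := by
  have h1 : |z| ≤ z^2/2 + z + 2 := by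
    rcases abs_cases z with ⟨h, _⟩ | ⟨h, _⟩ <;> rw [h] <;> nlinarith [sq_nonneg (z+2), sq_nonneg z]
  have h2 : z^2/2 + z + 2 ≤ Real.exp (z^2/2 + z + 2) := by
    have := Real.add_one_le_exp (z^2/2 + z + 2); linarith
  have h3 : |z| * Real.exp (-z^2/2) ≤ Real.exp (z^2/2 + z + 2) * Real.exp (-z^2/2) :=
    mul_le_mul_of_nonneg_right (h1.trans h2) (Real.exp_pos _).le
  rw [← Real.exp_add] at h3
  have h4 : Real.exp (z^2/2 + z + 2 + -z^2/2) = Real.exp 2 * Real.exp z := by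
    rw [← Real.exp_add]; ring_nf
  unfold stdPhi
  rw [div_mul_eq_mul_div, mul_div_assoc']
  gcongr ?_ / _
  rw [h4] at h3; linarith

lemma stdCDF_nonneg (b : ℝ) : 0 ≤ stdCDF b :=
  setIntegral_nonneg measurableSet_Iic fun z _ => (stdPhi_pos z).le

lemma stdCDF_le_exp (b : ℝ) : stdCDF b ≤ Real.exp (1/2) / Real.sqrt (2*Real.pi) * Real.exp b := by
  have h1 : stdCDF b ≤ ∫ z in Iic b, Real.exp (1/2) / Real.sqrt (2*Real.pi) * Real.exp z := by
    apply setIntegral_mono_on integrable_stdPhi.integrableOn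
      ((integrableOn_exp_Iic b).const_mul _) measurableSet_Iic (fun z _ => stdPhi_le_exp z)
  rwa [MeasureTheory.integral_const_mul, integral_exp_Iic] at h1

lemma tendsto_stdPhi_atBot : Tendsto stdPhi atBot (𝓝 0) := by
  have hup : Tendsto (fun b : ℝ => Real.exp (1/2) / Real.sqrt (2*Real.pi) * Real.exp b) atBot (𝓝 0) := by
    simpa using Real.tendsto_exp_atBot.const_mul (Real.exp (1/2) / Real.sqrt (2*Real.pi))
  exact tendsto_of_tendsto_of_tendsto_of_le_of_le tendsto_const_nhds hup
    (fun b => (stdPhi_pos b).le) (fun b => stdPhi_le_exp b)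

lemma tendsto_stdCDF_atBot : Tendsto stdCDF atBot (𝓝 0) := by
  have hup : Tendsto (fun b : ℝ => Real.exp (1/2) / Real.sqrt (2*Real.pi) * Real.exp b) atBot (𝓝 0) := by
    simpa using Real.tendsto_exp_atBot.const_mul (Real.exp (1/2) / Real.sqrt (2*Real.pi))
  exact tendsto_of_tendsto_of_tendsto_of_le_of_le tendsto_const_nhds hup
    stdCDF_nonneg stdCDF_le_exp

lemma tendsto_mul_stdPhi_atBot : Tendsto (fun z : ℝ => z * stdPhi z) atBot (𝓝 0) := by
  have hup : Tendsto (fun b : ℝ => Real.exp 2 / Real.sqrt (2*Real.pi) * Real.exp b) atBot (𝓝 0) := by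
    simpa using Real.tendsto_exp_atBot.const_mul (Real.exp 2 / Real.sqrt (2*Real.pi))
  apply squeeze_zero_norm (fun z => ?_) hup
  rw [Real.norm_eq_abs, abs_mul, abs_of_nonneg (stdPhi_pos z).le]
  exact abs_mul_stdPhi_le z

lemma integral_mul_stdPhi_Iic (b : ℝ) : ∫ z in Iic b, z * stdPhi z = - stdPhi b := by
  have h := integral_Iic_of_hasDerivAt_of_tendsto' (a := b) (m := 0)
    (f := fun z => -stdPhi z) (f' := fun z => z * stdPhi z)
    (fun x _ => (hasDerivAt_stdPhi x).neg.congr_deriv (by ring))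
    integrable_mul_stdPhi.integrableOn
    (by simpa using tendsto_stdPhi_atBot.neg)
  simpa using h

lemma integral_sq_mul_stdPhi_Iic (b : ℝ) :
    ∫ z in Iic b, z ^ 2 * stdPhi z = stdCDF b - b * stdPhi b := by
  have hder : ∀ x : ℝ, HasDerivAt (fun z => -(z * stdPhi z))
      (x ^ 2 * stdPhi x - stdPhi x) x := by
    intro x
    have h := ((hasDerivAt_id x).mul (hasDerivAt_stdPhi x)).neg
    exact h.congr_deriv (by simp only [id_eq, id]; ring)
  have h := integral_Iic_of_hasDerivAt_of_tendsto' (a := b) (m := 0)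
    (f := fun z => -(z * stdPhi z)) (f' := fun z => z ^ 2 * stdPhi z - stdPhi z)
    (fun x _ => hder x)
    ((integrable_sq_mul_stdPhi.sub integrable_stdPhi).integrableOn)
    (by simpa using tendsto_mul_stdPhi_atBot.neg)
  rw [integral_sub integrable_sq_mul_stdPhi.integrableOn integrable_stdPhi.integrableOn] at h
  have h' : (∫ z in Iic b, z ^ 2 * stdPhi z) - ∫ z in Iic b, stdPhi z
      = -(b * stdPhi b) - 0 := h
  have h2 : stdCDF b = ∫ z in Iic b, stdPhi z := rfl
  rw [h2]
  linarith

lemma stdCDF_pos (b : ℝ) : 0 < stdCDF b := by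
  have h1 : stdCDF b - stdCDF (b-1) = ∫ z in (b-1)..b, stdPhi z :=
    intervalIntegral.integral_Iic_sub_Iic integrable_stdPhi.integrableOn integrable_stdPhi.integrableOn
  have h2 : 0 < ∫ z in (b-1)..b, stdPhi z :=
    intervalIntegral.intervalIntegral_pos_of_pos
      integrable_stdPhi.intervalIntegrable stdPhi_pos (by linarith)
  linarith [stdCDF_nonneg (b-1)]

lemma hasDerivAt_stdCDF (b : ℝ) : HasDerivAt stdCDF (stdPhi b) b := by
  have heq : stdCDF = fun x => stdCDF 0 + ∫ z in (0:ℝ)..x, stdPhi z := by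
    funext x
    rw [← intervalIntegral.integral_Iic_sub_Iic integrable_stdPhi.integrableOn integrable_stdPhi.integrableOn]
    show stdCDF x = stdCDF 0 + (stdCDF x - stdCDF 0)
    ring
  rw [heq]
  exact ((continuous_stdPhi.integral_hasStrictDerivAt 0 b).hasDerivAt).const_add _

/-- auxiliary: the denominator `√(b²+8) - 3b`. -/
noncomputable def millsD (b : ℝ) : ℝ := Real.sqrt (b^2+8) - 3*b

lemma sqrt_sq_add_eight_pos (b : ℝ) : 0 < Real.sqrt (b^2+8) :=
  Real.sqrt_pos.2 (by positivity)

lemma sq_sqrt_sq_add_eight (b : ℝ) : (Real.sqrt (b^2+8))^2 = b^2+8 :=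
  Real.sq_sqrt (by positivity)

lemma millsD_pos {b : ℝ} (hb : b < 1) : 0 < millsD b := by
  unfold millsD
  have hs := sqrt_sq_add_eight_pos b
  have hs2 := sq_sqrt_sq_add_eight b
  by_contra h
  push_neg at h
  have h' : Real.sqrt (b^2+8) ≤ 3*b := by linarith
  have hb0 : 0 < b := by nlinarith
  have := mul_self_le_mul_self hs.le h'
  nlinarith

lemma millsD_ge_two {b : ℝ} (hb : b ≤ 0) : 2 ≤ millsD b := by
  unfold millsD
  have h2 : (2:ℝ) ≤ Real.sqrt (b^2+8) := by
    rw [show (2:ℝ) = Real.sqrt 4 by rw [show (4:ℝ) = 2^2 by norm_num, Real.sqrt_sq (by norm_num)]]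
    exact Real.sqrt_le_sqrt (by nlinarith)
  linarith

lemma hasDerivAt_sqrt_sq_add_eight (x : ℝ) :
    HasDerivAt (fun x : ℝ => Real.sqrt (x^2+8)) (x / Real.sqrt (x^2+8)) x := by
  have hpos : (0:ℝ) < x^2+8 := by positivity
  have h1 : HasDerivAt (fun x : ℝ => x^2+8) (2*x) x := by
    simpa using (hasDerivAt_pow 2 x).add_const 8
  have h2 := (Real.hasDerivAt_sqrt hpos.ne').comp x h1
  exact h2.congr_deriv (by field_simp)

/-- The comparison function in the ODE argument. -/
noncomputable def millsV (b : ℝ) : ℝ := 4 * stdPhi b / millsD b - stdCDF b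

lemma hasDerivAt_millsV {x : ℝ} (hx : x < 1) :
    HasDerivAt millsV
      ((4 * (-x * stdPhi x) * millsD x - 4 * stdPhi x * (x / Real.sqrt (x^2+8) - 3))
          / (millsD x)^2 - stdPhi x) x := by
  have hD : millsD x ≠ 0 := (millsD_pos hx).ne'
  have hnum : HasDerivAt (fun x => 4 * stdPhi x) (4 * (-x * stdPhi x)) x :=
    (hasDerivAt_stdPhi x).const_mul 4
  have hden : HasDerivAt millsD (x / Real.sqrt (x^2+8) - 3) x := by
    have := (hasDerivAt_sqrt_sq_add_eight x).sub ((hasDerivAt_id x).const_mul 3)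
    exact this.congr_deriv (by ring)
  exact (hnum.div hden hD).sub (hasDerivAt_stdCDF x)

lemma millsV_deriv_nonneg {x : ℝ} (hx : x < 1) :
    0 ≤ (4 * (-x * stdPhi x) * millsD x - 4 * stdPhi x * (x / Real.sqrt (x^2+8) - 3))
          / (millsD x)^2 - stdPhi x := by
  set s := Real.sqrt (x^2+8) with hs_def
  have hs := sqrt_sq_add_eight_pos x
  have hs2 := sq_sqrt_sq_add_eight x
  have hD := millsD_pos hx
  have hp := stdPhi_pos x
  have hDval : millsD x = s - 3*x := rfl
  -- positivity of N = x³+6x+(x²+2)s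
  have hN : 0 ≤ x^3 + 6*x + (x^2+2)*s := by
    have ha : 0 < (x^2+2)*s := by positivity
    have key32 : ((x^2+2)*s)^2 - (x^3+6*x)^2 = 32 := by
      have : ((x^2+2)*s)^2 = (x^2+2)^2 * (x^2+8) := by rw [mul_pow, hs2]
      rw [this]; ring
    nlinarith [ha, key32, sq_nonneg (x^3+6*x + (x^2+2)*s), sq_nonneg (x^3+6*x - (x^2+2)*s)]
  rw [sub_nonneg, le_div_iff₀ (by positivity : (0:ℝ) < (millsD x)^2)]
  rw [hDval]
  have goal' : stdPhi x * (s - 3*x)^2 * s ≤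
      (4 * (-x * stdPhi x) * (s - 3*x) - 4 * stdPhi x * (x / s - 3)) * s := by
    have hxds : (x / s) * s = x := div_mul_cancel₀ x hs.ne'
    have expand : (4 * (-x * stdPhi x) * (s - 3*x) - 4 * stdPhi x * (x / s - 3)) * s
        = stdPhi x * (-4*x*(s-3*x)*s - 4*x + 12*s) := by
      have hs0 : s ≠ 0 := hs.ne'
      field_simp
      ring
    rw [expand]
    have key : (s - 3*x)^2 * s + (4*x*(s-3*x)*s + 4*x - 12*s)
        = -(2*(x^3 + 6*x + (x^2+2)*s)) := by linear_combination (s - 2*x) * hs2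
    nlinarith [mul_nonneg hp.le hN, hp, hs]
  exact le_of_mul_le_mul_right (by rw [mul_assoc] at goal' ⊢; exact goal') hs

lemma monotoneOn_millsV : MonotoneOn millsV (Iio 1) := by
  apply monotoneOn_of_hasDerivWithinAt_nonneg (convex_Iio 1)
    (f' := fun x => (4 * (-x * stdPhi x) * millsD x
      - 4 * stdPhi x * (x / Real.sqrt (x^2+8) - 3)) / (millsD x)^2 - stdPhi x)
  · intro x hx
    exact (hasDerivAt_millsV hx).continuousAt.continuousWithinAt
  · intro x hx
    rw [interior_Iio] at hx
    exact (hasDerivAt_millsV hx).hasDerivWithinAt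
  · intro x hx
    rw [interior_Iio] at hx
    exact millsV_deriv_nonneg hx

lemma tendsto_millsV_atBot : Tendsto millsV atBot (𝓝 0) := by
  have h1 : Tendsto (fun b : ℝ => 4 * stdPhi b / millsD b) atBot (𝓝 0) := by
    have hg : Tendsto (fun b : ℝ => 2 * stdPhi b) atBot (𝓝 0) := by
      simpa using tendsto_stdPhi_atBot.const_mul 2
    apply squeeze_zero_norm' ?_ hg
    filter_upwards [Iic_mem_atBot (0:ℝ)] with b hb
    have hD := millsD_ge_two (hb : b ≤ 0)
    have hp := stdPhi_pos b
    have hDpos : (0:ℝ) < millsD b := by linarith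
    rw [Real.norm_eq_abs, abs_of_nonneg (by positivity)]
    rw [div_le_iff₀ hDpos]
    nlinarith
  have := h1.sub tendsto_stdCDF_atBot
  rw [sub_zero] at this
  exact this

lemma millsV_nonneg {b : ℝ} (hb : b < 1) : 0 ≤ millsV b := by
  apply le_of_tendsto tendsto_millsV_atBot
  filter_upwards [Iic_mem_atBot b] with y hy
  exact monotoneOn_millsV (show y ∈ Iio 1 by exact lt_of_le_of_lt hy hb) hb hy

/-- The key Mills-type bound. -/
lemma key_mills (b : ℝ) : stdCDF b * (Real.sqrt (b^2+8) - 3*b) ≤ 4 * stdPhi b := by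
  rcases lt_or_ge b 1 with hb | hb
  · have hV := millsV_nonneg hb
    have hD := millsD_pos hb
    unfold millsV at hV
    rw [sub_nonneg, le_div_iff₀ hD] at hV
    exact hV
  · have hs2 := sq_sqrt_sq_add_eight b
    have hs := sqrt_sq_add_eight_pos b
    have hD : Real.sqrt (b^2+8) - 3*b ≤ 0 := by
      nlinarith [hs, hs2]
    have := stdCDF_pos b
    nlinarith [stdPhi_pos b]

lemma G_nonneg (b : ℝ) :
    0 ≤ (b^2-1) * (stdCDF b)^2 + 3*b*(stdPhi b)*(stdCDF b) + 2*(stdPhi b)^2 := by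
  have hkey := key_mills b
  have hA := stdCDF_pos b
  have hp := stdPhi_pos b
  have hs := sqrt_sq_add_eight_pos b
  have hs2 := sq_sqrt_sq_add_eight b
  have h1 : stdCDF b * Real.sqrt (b^2+8) ≤ 4 * stdPhi b + 3*b*stdCDF b := by nlinarith
  have h2 : 0 ≤ stdCDF b * Real.sqrt (b^2+8) := by positivity
  have h3 : (stdCDF b * Real.sqrt (b^2+8))^2 ≤ (4 * stdPhi b + 3*b*stdCDF b)^2 :=
    pow_le_pow_left₀ h2 h1 2
  have h4 : (stdCDF b * Real.sqrt (b^2+8))^2 = (stdCDF b)^2 * (b^2+8) := by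
    rw [mul_pow, hs2]
  nlinarith [h3, h4]



/-- **Truncated variance bound.** For a standard normal `Z` and any `b ∈ ℝ`,
`Var(Z | Z ≤ b) ≤ (b + m(b))²` where `m(b) = φ(b)/Φ(b)` is the inverse Mills ratio
(note `b + m(b) = E[b - Z | Z ≤ b]`). -/
theorem stmt12 (b : ℝ) : truncVar b ≤ (b + millsM b) ^ 2 := by
  have hA := stdCDF_pos b
  have hp := stdPhi_pos b
  have hG := G_nonneg b
  rw [truncVar, millsM, integral_mul_stdPhi_Iic, integral_sq_mul_stdPhi_Iic]
  rw [← sub_nonneg]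
  have hA2 : (0:ℝ) < (stdCDF b)^2 := by positivity
  have key : ((b + stdPhi b / stdCDF b)^2
      - ((stdCDF b)⁻¹ * (stdCDF b - b * stdPhi b) - ((stdCDF b)⁻¹ * -stdPhi b)^2))
        * (stdCDF b)^2
      = (b^2-1) * (stdCDF b)^2 + 3*b*(stdPhi b)*(stdCDF b) + 2*(stdPhi b)^2 := by
    field_simp
    ring
  nlinarith [hG, hA2, key]
end
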